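/- Let n ∈ ℕ be odd with n ≥ 3, V = {1, …, n}, and define the partition matroids M₁ = (V, B₁) and M₂ = (V, B₂) by B₁ = {B ⊆ V : 1 ∉ B and |B ∩ {i, i+1}| = 1 for every even i ∈ V} and B₂ = {B ⊆ V : n ∉ B and |B ∩ {i, i+1}| = 1 for every odd i < n}. Let W ∈ ℕ, W ≥ 1, and w ∈ ℤ^V with w_i = (−1)^{i+1} W. Then every p* ∈ ℤ^V minimizing g(p) = max_{B∈B₁} p(B) + max_{B∈B₂} (w − p)(B) over ℤ^V satisfies ‖p*‖∞ ≥ (n−1)W/2; i.e., the bound ‖p*‖∞ ≤ rW with r = (n−1)/2 is tight. -/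

import Mathlib

lemma sum_odd_aux (r : ℕ) : ∑ j ∈ Finset.range r, (2*(j:ℤ)+1) = (r:ℤ)*r := by
  induction r with
  | zero => simp
  | succ k ih => rw [Finset.sum_range_succ, ih]; push_cast; ring

def p0aux (r : ℕ) (W : ℤ) (i : ℕ) : ℤ := ((r:ℤ) - 2*((i/2 : ℕ):ℤ))*W

lemma sum_pairs (B : Finset ℕ) (r a : ℕ) (f : ℕ → ℤ) (v : ℕ → ℤ)
    (hB : ∀ i ∈ B, a ≤ i ∧ i < a + 2*r)
    (hcard : ∀ j < r, (B ∩ {2*j+a, 2*j+a+1}).card = 1)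
    (hval : ∀ j < r, ∀ x ∈ ({2*j+a, 2*j+a+1} : Finset ℕ), f x = v j) :
    ∑ i ∈ B, f i = ∑ j ∈ Finset.range r, v j := by
  have hdecomp : B = (Finset.range r).biUnion (fun j => B ∩ {2*j+a, 2*j+a+1}) := by
    ext i
    simp only [Finset.mem_biUnion, Finset.mem_range, Finset.mem_inter, Finset.mem_insert,
      Finset.mem_singleton]
    constructor
    · intro hi
      obtain ⟨h1, h2⟩ := hB i hi
      exact ⟨(i - a)/2, by omega, hi, by omega⟩
    · rintro ⟨j, _, hi, _⟩; exact hi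
  have hdisj : (↑(Finset.range r) : Set ℕ).PairwiseDisjoint
      (fun j => B ∩ ({2*j+a, 2*j+a+1} : Finset ℕ)) := by
    intro j _ j' _ hne
    simp only [Function.onFun, Finset.disjoint_left, Finset.mem_inter, Finset.mem_insert,
      Finset.mem_singleton]
    rintro x ⟨_, h1⟩ ⟨_, h2⟩
    omega
  rw [hdecomp, Finset.sum_biUnion hdisj]
  apply Finset.sum_congr rfl
  intro j hj
  rw [Finset.mem_range] at hj
  obtain ⟨x, hx⟩ := Finset.card_eq_one.mp (hcard j hj)
  rw [hx, Finset.sum_singleton]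
  have hxmem : x ∈ ({2*j+a, 2*j+a+1} : Finset ℕ) := by
    have h := hx ▸ Finset.mem_singleton_self x
    exact (Finset.mem_inter.mp h).2
  exact hval j hj x hxmem

/-- Tightness of the bound `‖p*‖∞ ≤ rW` for the dual of weighted matroid intersection:
for the partition matroids `M₁ = (V, B₁)`, `M₂ = (V, B₂)` on `V = {1, …, n}` (`n` odd)
with `B₁ = {B ⊆ V : 1 ∉ B, |B ∩ {i, i+1}| = 1 for even i ∈ V}` and
`B₂ = {B ⊆ V : n ∉ B, |B ∩ {i, i+1}| = 1 for odd i < n}`, and weights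
`w_i = (−1)^{i+1} W` with `W ≥ 1`, every minimizer `p*` of
`g(p) = max_{B∈B₁} p(B) + max_{B∈B₂} (w − p)(B)` satisfies `‖p*‖∞ ≥ (n−1)W/2 = rW`. -/
theorem stmt11 (n : ℕ) (hodd : Odd n) (hn : 3 ≤ n)
    (W : ℤ) (hW : 1 ≤ W) (w : ℕ → ℤ)
    (hw : ∀ i ∈ Finset.Icc 1 n, w i = (-1) ^ (i + 1) * W)
    (B₁ B₂ : Finset (Finset ℕ))
    (hB₁ : ∀ B : Finset ℕ, B ∈ B₁ ↔
      B ⊆ Finset.Icc 1 n ∧ 1 ∉ B ∧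
        ∀ i ∈ Finset.Icc 1 n, Even i → (B ∩ {i, i + 1}).card = 1)
    (hB₂ : ∀ B : Finset ℕ, B ∈ B₂ ↔
      B ⊆ Finset.Icc 1 n ∧ n ∉ B ∧
        ∀ i ∈ Finset.Icc 1 n, Odd i → i < n → (B ∩ {i, i + 1}).card = 1)
    (hne₁ : B₁.Nonempty) (hne₂ : B₂.Nonempty)
    (pstar : ℕ → ℤ)
    (hmin : ∀ p : ℕ → ℤ,
      B₁.sup' hne₁ (fun B => ∑ i ∈ B, pstar i) +
          B₂.sup' hne₂ (fun B => ∑ i ∈ B, (w i - pstar i)) ≤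
        B₁.sup' hne₁ (fun B => ∑ i ∈ B, p i) +
          B₂.sup' hne₂ (fun B => ∑ i ∈ B, (w i - p i))) :
    ((n : ℤ) - 1) / 2 * W ≤
      (Finset.Icc 1 n).sup' (Finset.nonempty_Icc.mpr (by omega)) fun i => |pstar i| := by
  obtain ⟨r, hr⟩ := hodd
  subst hr
  have hr1 : 1 ≤ r := by omega
  -- arithmetic sums
  have e1 : ∑ j ∈ Finset.range r, ((r:ℤ) - 2*((j:ℤ)+1))*W = -(r:ℤ)*W := by
    have h := sum_odd_aux r
    have hc : ∀ j ∈ Finset.range r, ((r:ℤ) - 2*((j:ℤ)+1))*W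
        = ((r:ℤ)-1)*W - (2*(j:ℤ)+1)*W := fun j _ => by ring
    rw [Finset.sum_congr rfl hc, Finset.sum_sub_distrib, ← Finset.sum_mul, ← Finset.sum_mul, h,
      Finset.sum_const, Finset.card_range, nsmul_eq_mul]
    ring
  have e2 : ∑ j ∈ Finset.range r, (2*(j:ℤ)+1 - (r:ℤ))*W = 0 := by
    have h := sum_odd_aux r
    have hc : ∀ j ∈ Finset.range r, (2*(j:ℤ)+1 - (r:ℤ))*W
        = (2*(j:ℤ)+1)*W - (r:ℤ)*W := fun j _ => by ring
    rw [Finset.sum_congr rfl hc, Finset.sum_sub_distrib, ← Finset.sum_mul, ← Finset.sum_mul, h,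
      Finset.sum_const, Finset.card_range, nsmul_eq_mul]
    ring
  -- p0 is constant -rW on B₁ bases
  have hA : ∀ B ∈ B₁, ∑ i ∈ B, p0aux r W i = -(r:ℤ)*W := by
    intro B hB
    rw [hB₁] at hB
    obtain ⟨hsub, h1, hcard⟩ := hB
    rw [sum_pairs B r 2 _ (fun j => ((r:ℤ) - 2*((j:ℤ)+1))*W) ?_ ?_ ?_]
    · exact e1
    · intro i hi
      have h := hsub hi
      rw [Finset.mem_Icc] at h
      have h1' : i ≠ 1 := fun h' => h1 (h' ▸ hi)
      omega
    · intro j hj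
      exact hcard (2*j+2) (by rw [Finset.mem_Icc]; omega) ⟨j+1, by ring⟩
    · intro j hj x hx
      simp only [Finset.mem_insert, Finset.mem_singleton] at hx
      have hx2 : x/2 = j+1 := by omega
      simp only [p0aux]
      rw [hx2]; push_cast; ring
  -- w - p0 sums to 0 on B₂ bases
  have hC : ∀ B ∈ B₂, ∑ i ∈ B, (w i - p0aux r W i) = 0 := by
    intro B hB
    rw [hB₂] at hB
    obtain ⟨hsub, h1, hcard⟩ := hB
    rw [sum_pairs B r 1 _ (fun j => (2*(j:ℤ)+1 - (r:ℤ))*W) ?_ ?_ ?_]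
    · exact e2
    · intro i hi
      have h := hsub hi
      rw [Finset.mem_Icc] at h
      have h1' : i ≠ 2*r+1 := fun h' => h1 (h' ▸ hi)
      omega
    · intro j hj
      exact hcard (2*j+1) (by rw [Finset.mem_Icc]; omega) ⟨j, by ring⟩ (by omega)
    · intro j hj x hx
      simp only [Finset.mem_insert, Finset.mem_singleton] at hx
      rcases hx with rfl | rfl
      · rw [hw (2*j+1) (by rw [Finset.mem_Icc]; omega)]
        have he : ((-1:ℤ))^(2*j+1+1) = 1 := Even.neg_one_pow ⟨j+1, by ring⟩
        rw [he]
        have h2 : (2*j+1)/2 = j := by omega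
        simp only [p0aux]
        rw [h2]; push_cast; ring
      · rw [hw (2*j+2) (by rw [Finset.mem_Icc]; omega)]
        have he : ((-1:ℤ))^(2*j+2+1) = -1 := Odd.neg_one_pow ⟨j+1, by ring⟩
        rw [he]
        have h2 : (2*j+2)/2 = j+1 := by omega
        simp only [p0aux]
        rw [h2]; push_cast; ring
  -- O₁ = {3,5,...,2r+1} is in B₁
  have hO1mem : (Finset.range r).image (fun j => 2*j+3) ∈ B₁ := by
    rw [hB₁]
    refine ⟨?_, ?_, ?_⟩
    · intro x hx
      simp only [Finset.mem_image, Finset.mem_range] at hx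
      obtain ⟨j, hj, rfl⟩ := hx
      rw [Finset.mem_Icc]; omega
    · intro h
      simp only [Finset.mem_image, Finset.mem_range] at h
      obtain ⟨j, _, hj⟩ := h; omega
    · intro i hi hev
      rw [Finset.mem_Icc] at hi
      obtain ⟨m, rfl⟩ := hev
      have hpair : (Finset.range r).image (fun j => 2*j+3) ∩ {m+m, m+m+1} = {m+m+1} := by
        ext x
        simp only [Finset.mem_inter, Finset.mem_image, Finset.mem_range, Finset.mem_insert,
          Finset.mem_singleton]
        constructor
        · rintro ⟨⟨j, hj, rfl⟩, hx⟩; omega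
        · rintro rfl
          exact ⟨⟨m-1, by omega, by omega⟩, Or.inr rfl⟩
      rw [hpair, Finset.card_singleton]
  -- O₂ = {1,3,...,2r-1} is in B₂
  have hO2mem : (Finset.range r).image (fun j => 2*j+1) ∈ B₂ := by
    rw [hB₂]
    refine ⟨?_, ?_, ?_⟩
    · intro x hx
      simp only [Finset.mem_image, Finset.mem_range] at hx
      obtain ⟨j, hj, rfl⟩ := hx
      rw [Finset.mem_Icc]; omega
    · intro h
      simp only [Finset.mem_image, Finset.mem_range] at h
      obtain ⟨j, hj, h⟩ := h; omega
    · intro i hi hoddi hlt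
      rw [Finset.mem_Icc] at hi
      obtain ⟨m, hm⟩ := hoddi
      have hpair : (Finset.range r).image (fun j => 2*j+1) ∩ {i, i+1} = {i} := by
        ext x
        simp only [Finset.mem_inter, Finset.mem_image, Finset.mem_range, Finset.mem_insert,
          Finset.mem_singleton]
        constructor
        · rintro ⟨⟨j, hj, rfl⟩, hx⟩; omega
        · rintro rfl
          exact ⟨⟨m, by omega, by omega⟩, Or.inl rfl⟩
      rw [hpair, Finset.card_singleton]
  -- sums over O₁, O₂
  have hO1sum : ∑ i ∈ (Finset.range r).image (fun j => 2*j+3), pstar i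
      = ∑ j ∈ Finset.range r, pstar (2*j+3) :=
    Finset.sum_image (fun x _ y _ h => by omega)
  have hO2sum : ∑ i ∈ (Finset.range r).image (fun j => 2*j+1), (w i - pstar i)
      = (r:ℤ)*W - ∑ j ∈ Finset.range r, pstar (2*j+1) := by
    rw [Finset.sum_image (fun x _ y _ h => by omega)]
    have hc : ∀ j ∈ Finset.range r, w (2*j+1) - pstar (2*j+1) = W - pstar (2*j+1) := by
      intro j hj
      rw [Finset.mem_range] at hj
      rw [hw (2*j+1) (by rw [Finset.mem_Icc]; omega)]
      rw [show ((-1:ℤ))^(2*j+1+1) = 1 from Even.neg_one_pow ⟨j+1, by ring⟩]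
      ring
    rw [Finset.sum_congr rfl hc, Finset.sum_sub_distrib, Finset.sum_const, Finset.card_range,
      nsmul_eq_mul]
  -- bounds on sup'
  have hsup1 : ∑ j ∈ Finset.range r, pstar (2*j+3)
      ≤ B₁.sup' hne₁ (fun B => ∑ i ∈ B, pstar i) := by
    rw [← hO1sum]; exact Finset.le_sup' (fun B => ∑ i ∈ B, pstar i) hO1mem
  have hsup2 : (r:ℤ)*W - ∑ j ∈ Finset.range r, pstar (2*j+1)
      ≤ B₂.sup' hne₂ (fun B => ∑ i ∈ B, (w i - pstar i)) := by
    rw [← hO2sum]; exact Finset.le_sup' (fun B => ∑ i ∈ B, (w i - pstar i)) hO2mem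
  have hgle : B₁.sup' hne₁ (fun B => ∑ i ∈ B, pstar i) +
      B₂.sup' hne₂ (fun B => ∑ i ∈ B, (w i - pstar i)) ≤ -(r:ℤ)*W := by
    refine (hmin (p0aux r W)).trans ?_
    have h1 : B₁.sup' hne₁ (fun B => ∑ i ∈ B, p0aux r W i) ≤ -(r:ℤ)*W :=
      Finset.sup'_le _ _ (fun B hB => (hA B hB).le)
    have h2 : B₂.sup' hne₂ (fun B => ∑ i ∈ B, (w i - p0aux r W i)) ≤ 0 :=
      Finset.sup'_le _ _ (fun B hB => (hC B hB).le)
    linarith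
  -- telescoping
  have htel : ∑ j ∈ Finset.range r, pstar (2*j+1) - ∑ j ∈ Finset.range r, pstar (2*j+3)
      = pstar 1 - pstar (2*r+1) := by
    rw [← Finset.sum_sub_distrib]
    have h := Finset.sum_range_sub' (fun j => pstar (2*j+1)) r
    have hc : ∀ j ∈ Finset.range r, pstar (2*j+1) - pstar (2*j+3)
        = (fun j => pstar (2*j+1)) j - (fun j => pstar (2*j+1)) (j+1) := by
      intro j _
      simp only []
      rw [show 2*(j+1)+1 = 2*j+3 from by ring]
    rw [Finset.sum_congr rfl hc, h]
  -- conclude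
  have hkey : 2*(r:ℤ)*W ≤ pstar 1 - pstar (2*r+1) := by linarith
  have h1mem : (1:ℕ) ∈ Finset.Icc 1 (2*r+1) := by rw [Finset.mem_Icc]; omega
  have hnmem : (2*r+1) ∈ Finset.Icc 1 (2*r+1) := by rw [Finset.mem_Icc]; omega
  have b1 := Finset.le_sup' (fun i => |pstar i|) h1mem
  have bn := Finset.le_sup' (fun i => |pstar i|) hnmem
  beta_reduce at b1 bn
  have ha1 : pstar 1 ≤ |pstar 1| := le_abs_self _
  have han : -pstar (2*r+1) ≤ |pstar (2*r+1)| := neg_le_abs _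
  have hgoal : ((↑(2*r+1):ℤ) - 1)/2 = (r:ℤ) := by push_cast; omega
  rw [hgoal]
  linarith
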